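/- For every σ > 0 and every real λ, ∫_{−∞}^{λ} (Q(s) − Q(λ))·e^{σ s} ds = Q(σ − λ)/(φ(σ)·σ·√(2π)), where Q is the Gaussian Q-function and φ the standard Gaussian density. -/

import Mathlib

open MeasureTheory Real Set

/-- The standard Gaussian density `φ(x) = (1/√(2π))·exp(−x²/2)`. -/
noncomputable def gaussPDF (x : ℝ) : ℝ := (Real.sqrt (2 * Real.pi))⁻¹ * Real.exp (-x ^ 2 / 2)

/-- The Gaussian Q-function `Q(τ) = ∫_τ^∞ φ(x) dx`. -/
noncomputable def gaussQ (τ : ℝ) : ℝ := ∫ x in Set.Ioi τ, gaussPDF x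

/-- The Gaussian Mills ratio `R(τ) = Q(τ)/φ(τ)`. -/
noncomputable def millsR (τ : ℝ) : ℝ := gaussQ τ / gaussPDF τ

lemma gaussPDF_cont : Continuous gaussPDF := by
  unfold gaussPDF
  fun_prop

lemma gaussPDF_nonneg (x : ℝ) : 0 ≤ gaussPDF x := by
  unfold gaussPDF
  positivity

lemma gaussPDF_integrable : Integrable gaussPDF := by
  have h := (integrable_exp_neg_mul_sq (by norm_num : (0:ℝ) < 1/2)).const_mul
    (Real.sqrt (2 * Real.pi))⁻¹
  refine h.congr (Filter.EventuallyEq.of_eq (funext fun x => ?_))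
  unfold gaussPDF
  ring_nf

lemma integral_gaussPDF : ∫ x, gaussPDF x = 1 := by
  have h : ∫ x : ℝ, Real.exp (-(1/2) * x ^ 2) = Real.sqrt (Real.pi / (1/2)) :=
    integral_gaussian (1/2)
  have h2 : (∫ x, gaussPDF x) = (Real.sqrt (2 * Real.pi))⁻¹ * ∫ x : ℝ, Real.exp (-(1/2) * x ^ 2) := by
    rw [← integral_const_mul]
    congr 1 with x
    unfold gaussPDF
    ring_nf
  rw [h2, h]
  rw [show Real.pi / (1/2) = 2 * Real.pi by ring]
  rw [inv_mul_cancel₀ (Real.sqrt_ne_zero'.2 (by positivity))]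

lemma gaussQ_eq (τ : ℝ) : gaussQ τ = 1 - ∫ x in Iic τ, gaussPDF x := by
  have := intervalIntegral.integral_Iic_add_Ioi (b := τ) gaussPDF_integrable.integrableOn
    gaussPDF_integrable.integrableOn
  rw [integral_gaussPDF] at this
  unfold gaussQ
  linarith

lemma hasDerivAt_gaussQ (τ : ℝ) : HasDerivAt gaussQ (-(gaussPDF τ)) τ := by
  have hF : ∀ t : ℝ, (∫ x in Iic t, gaussPDF x)
      = (∫ x in Iic (0:ℝ), gaussPDF x) + ∫ x in (0:ℝ)..t, gaussPDF x := by
    intro t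
    have := intervalIntegral.integral_Iic_sub_Iic (a := (0:ℝ)) (b := t) (μ := volume)
      gaussPDF_integrable.integrableOn gaussPDF_integrable.integrableOn
    linarith
  have hd : HasDerivAt (fun t => ∫ x in (0:ℝ)..t, gaussPDF x) (gaussPDF τ) τ :=
    intervalIntegral.integral_hasDerivAt_right
      (gaussPDF_integrable.intervalIntegrable)
      (gaussPDF_cont.stronglyMeasurableAtFilter _ _)
      gaussPDF_cont.continuousAt
  have : HasDerivAt (fun t => 1 - ((∫ x in Iic (0:ℝ), gaussPDF x) + ∫ x in (0:ℝ)..t, gaussPDF x))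
      (-(gaussPDF τ)) τ := ((hd.const_add _).const_sub 1)
  refine this.congr_of_eventuallyEq (Filter.Eventually.of_forall fun t => ?_)
  rw [gaussQ_eq, hF]

lemma gaussQ_nonneg (τ : ℝ) : 0 ≤ gaussQ τ :=
  setIntegral_nonneg measurableSet_Ioi fun x _ => gaussPDF_nonneg x

lemma gaussQ_le_one (τ : ℝ) : gaussQ τ ≤ 1 := by
  rw [gaussQ_eq]
  have : 0 ≤ ∫ x in Iic τ, gaussPDF x :=
    setIntegral_nonneg measurableSet_Iic fun x _ => gaussPDF_nonneg x
  linarith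

lemma tendsto_int_Iic_atBot :
    Filter.Tendsto (fun s => ∫ x in Iic s, gaussPDF x) Filter.atBot (nhds 0) := by
  set c : ℝ := (Real.sqrt (2 * Real.pi))⁻¹ with hc
  have hub : ∀ s : ℝ, s ≤ -2 → (∫ x in Iic s, gaussPDF x) ≤ c * Real.exp s := by
    intro s hs
    have h1 : (∫ x in Iic s, gaussPDF x) ≤ ∫ x in Iic s, c * Real.exp x := by
      refine setIntegral_mono_on gaussPDF_integrable.integrableOn
        ((integrableOn_exp_Iic s).const_mul c) measurableSet_Iic fun x hx => ?_
      have hx2 : x ≤ -2 := le_trans hx hs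
      unfold gaussPDF
      have : -x ^ 2 / 2 ≤ x := by nlinarith
      exact mul_le_mul_of_nonneg_left (Real.exp_le_exp.2 this) (by positivity)
    rw [integral_const_mul, integral_exp_Iic] at h1
    exact h1
  have hlb : ∀ s : ℝ, 0 ≤ ∫ x in Iic s, gaussPDF x := fun s =>
    setIntegral_nonneg measurableSet_Iic fun x _ => gaussPDF_nonneg x
  have hexp : Filter.Tendsto (fun s : ℝ => c * Real.exp s) Filter.atBot (nhds 0) := by
    simpa using Real.tendsto_exp_atBot.const_mul c
  refine tendsto_of_tendsto_of_tendsto_of_le_of_le' tendsto_const_nhds hexp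
    (Filter.Eventually.of_forall hlb) ?_
  filter_upwards [Filter.Iic_mem_atBot (-2 : ℝ)] with s hs using hub s hs

lemma tendsto_gaussQ_atBot : Filter.Tendsto gaussQ Filter.atBot (nhds 1) := by
  have := tendsto_int_Iic_atBot.const_sub 1
  simp only [sub_zero] at this
  exact this.congr fun s => (gaussQ_eq s).symm

lemma gaussQ_neg (t : ℝ) : gaussQ (-t) = 1 - gaussQ t := by
  have h : (∫ x in Ioi (-t), gaussPDF (-x)) = ∫ x in Iic t, gaussPDF x := by
    simpa using integral_comp_neg_Ioi (c := -t) (f := gaussPDF)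
  have heven : ∀ x : ℝ, gaussPDF (-x) = gaussPDF x := by
    intro x; unfold gaussPDF; ring_nf
  rw [gaussQ_eq t, ← h]
  unfold gaussQ
  rw [setIntegral_congr_fun measurableSet_Ioi (fun x _ => (heven x).symm)]
  ring

lemma gaussPDF_mul_exp (σ x : ℝ) :
    gaussPDF x * Real.exp (σ * x) = Real.exp (σ ^ 2 / 2) * gaussPDF (x - σ) := by
  unfold gaussPDF
  rw [mul_assoc, ← Real.exp_add, mul_comm (Real.exp (σ^2/2)), mul_assoc, ← Real.exp_add]
  congr 2
  ring

/-- For every `σ > 0` and real `λ`,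
`∫_{−∞}^{λ} (Q(s) − Q(λ))·e^{σ s} ds = Q(σ − λ)/(φ(σ)·σ·√(2π))`. -/
theorem gaussian_spectral_integral_identity (σ l : ℝ) (hσ : 0 < σ) :
    ∫ s in Set.Iio l, (gaussQ s - gaussQ l) * Real.exp (σ * s)
      = gaussQ (σ - l) / (gaussPDF σ * σ * Real.sqrt (2 * Real.pi)) := by
  have hσ' : σ ≠ 0 := ne_of_gt hσ
  set c : ℝ := Real.exp (σ ^ 2 / 2) with hc
  set H : ℝ → ℝ := fun s => (gaussQ s - gaussQ l) * (Real.exp (σ * s) / σ)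
      - c / σ * gaussQ (s - σ) with hH
  have hderiv : ∀ s : ℝ, HasDerivAt H ((gaussQ s - gaussQ l) * Real.exp (σ * s)) s := by
    intro s
    have h1 : HasDerivAt (fun s => gaussQ s - gaussQ l) (-(gaussPDF s)) s :=
      (hasDerivAt_gaussQ s).sub_const _
    have h2 : HasDerivAt (fun s : ℝ => Real.exp (σ * s) / σ)
        (Real.exp (σ * s) * σ / σ) s := by
      have : HasDerivAt (fun s : ℝ => σ * s) (σ * 1) s := (hasDerivAt_id s).const_mul σ
      simpa [mul_comm] using (this.exp).div_const σ
    have h3 : HasDerivAt (fun s => gaussQ (s - σ)) (-(gaussPDF (s - σ)) * 1) s :=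
      by exact (hasDerivAt_gaussQ (s - σ)).comp s ((hasDerivAt_id' s).sub_const σ)
    have h := (h1.mul h2).sub (h3.const_mul (c / σ))
    refine h.congr_deriv ?_
    have key := gaussPDF_mul_exp σ s
    rw [← hc] at key
    linear_combination ((gaussQ s - gaussQ l) * Real.exp (σ * s)) * (mul_inv_cancel₀ hσ') - key / σ
  have hcontexp : Continuous fun s : ℝ => Real.exp (σ * s) :=
    Real.continuous_exp.comp (continuous_const.mul continuous_id)
  have hg : IntegrableOn (fun s => Real.exp (σ * s)) (Iic l) := by
    refine integrableOn_Iic_of_intervalIntegral_norm_bounded (a := id)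
      (σ⁻¹ * Real.exp (σ * l)) l
      (fun y => hcontexp.integrableOn_Ioc) Filter.tendsto_id
      (Filter.Eventually.of_forall fun y => ?_)
    have h1 : ∀ x : ℝ, ‖Real.exp (σ * x)‖ = Real.exp (σ * x) := fun x =>
      norm_of_nonneg (Real.exp_pos _).le
    simp only [id, h1]
    have h2 : ∫ x in y..l, Real.exp (σ * x)
        = σ⁻¹ * (Real.exp (σ * l) - Real.exp (σ * y)) := by
      have h3 := intervalIntegral.smul_integral_comp_mul_left (a := y) (b := l) Real.exp σ
      rw [integral_exp, smul_eq_mul] at h3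
      field_simp
      exact h3
    rw [h2]
    have := (Real.exp_pos (σ * y)).le
    have hinv : 0 ≤ σ⁻¹ := (inv_pos.2 hσ).le
    nlinarith
  have hf_int : IntegrableOn (fun s => (gaussQ s - gaussQ l) * Real.exp (σ * s)) (Iic l) := by
    refine hg.mono' ?_ ?_
    · have hQc : Continuous gaussQ :=
        continuous_iff_continuousAt.2 fun x => (hasDerivAt_gaussQ x).continuousAt
      exact (((hQc.sub continuous_const).mul
        (Real.continuous_exp.comp (continuous_const.mul continuous_id)))).aestronglyMeasurable
    · refine Filter.Eventually.of_forall fun s => ?_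
      rw [norm_mul, norm_of_nonneg (Real.exp_pos _).le]
      have h1 : |gaussQ s - gaussQ l| ≤ 1 := by
        rw [abs_le]
        constructor <;> nlinarith [gaussQ_nonneg s, gaussQ_le_one s, gaussQ_nonneg l, gaussQ_le_one l]
      calc |gaussQ s - gaussQ l| * Real.exp (σ * s) ≤ 1 * Real.exp (σ * s) :=
            mul_le_mul_of_nonneg_right h1 (Real.exp_pos _).le
        _ = Real.exp (σ * s) := one_mul _
  have hexp0 : Filter.Tendsto (fun s : ℝ => Real.exp (σ * s)) Filter.atBot (nhds 0) :=
    Real.tendsto_exp_atBot.comp (Filter.tendsto_id.const_mul_atBot hσ)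
  have hsub : Filter.Tendsto (fun s : ℝ => s - σ) Filter.atBot Filter.atBot :=
    Filter.tendsto_atBot_add_const_right _ (-σ) Filter.tendsto_id
  have hlim : Filter.Tendsto H Filter.atBot (nhds (-(c / σ))) := by
    have h1 : Filter.Tendsto (fun s => (gaussQ s - gaussQ l) * (Real.exp (σ * s) / σ))
        Filter.atBot (nhds ((1 - gaussQ l) * (0 / σ))) :=
      (tendsto_gaussQ_atBot.sub_const _).mul (hexp0.div_const σ)
    have h2 : Filter.Tendsto (fun s => c / σ * gaussQ (s - σ)) Filter.atBot
        (nhds (c / σ * 1)) := (tendsto_gaussQ_atBot.comp hsub).const_mul _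
    have := h1.sub h2
    simpa using this
  have hint := integral_Iic_of_hasDerivAt_of_tendsto' (fun x _ => hderiv x) hf_int hlim
  rw [← integral_Iic_eq_integral_Iio, hint]
  have hQneg : gaussQ (σ - l) = 1 - gaussQ (l - σ) := by
    have := gaussQ_neg (l - σ)
    rwa [show -(l - σ) = σ - l by ring] at this
  have hsqrt : Real.sqrt (2 * Real.pi) ≠ 0 := Real.sqrt_ne_zero'.2 (by positivity)
  have hpdf : gaussPDF σ * Real.sqrt (2 * Real.pi) = Real.exp (-σ ^ 2 / 2) := by
    unfold gaussPDF
    field_simp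
  have hce : c * Real.exp (-σ ^ 2 / 2) = 1 := by
    rw [hc, ← Real.exp_add]
    rw [show σ ^ 2 / 2 + -σ ^ 2 / 2 = 0 by ring, Real.exp_zero]
  simp only [hH, hQneg, sub_self, zero_mul, zero_sub]
  have hden : gaussPDF σ * σ * Real.sqrt (2 * Real.pi) = Real.exp (-σ ^ 2 / 2) * σ := by
    rw [← hpdf]; ring
  rw [hden, eq_div_iff (by positivity : Real.exp (-σ ^ 2 / 2) * σ ≠ 0)]
  linear_combination (1 - gaussQ (l - σ)) * hce
    + c * Real.exp (-σ ^ 2 / 2) * (1 - gaussQ (l - σ)) * (inv_mul_cancel₀ hσ')
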